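/- Let S_d(x) := Σ_{k=0}^{d} x^k / k! denote the degree-d truncation of the Taylor series of e^x. There exist constants C > 0 and c ∈ (0,1) such that for every nonnegative integer d, sup_{x ∈ [0,∞)} |1/S_d(x) - e^{-x}| ≤ C·c^d. (Note that S_d(x) > 0 for all x ≥ 0, so 1/S_d(x) is well-defined, and in fact 0 ≤ 1/S_d(x) - e^{-x} for all x ≥ 0.) -/

import Mathlib

open Finset in
lemma exp_hasSum (x : ℝ) : HasSum (fun n : ℕ => x ^ n / n.factorial) (Real.exp x) := by
  rw [Real.exp_eq_exp_ℝ]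
  exact NormedSpace.expSeries_div_hasSum_exp x

open Finset in
/-- Tail bound for the exponential series. -/
lemma exp_tail_le (x : ℝ) (hx : 0 ≤ x) (n : ℕ) :
    Real.exp x - ∑ k ∈ range n, x ^ k / k.factorial ≤
      x ^ n / n.factorial * Real.exp x := by
  have hsum := exp_hasSum x
  have hsummable : Summable (fun k : ℕ => x ^ k / k.factorial) := hsum.summable
  have htail : Real.exp x - ∑ k ∈ range n, x ^ k / k.factorial =
      ∑' k : ℕ, x ^ (k + n) / (k + n).factorial := by
    have := Summable.sum_add_tsum_nat_add (f := fun k : ℕ => x ^ k / k.factorial) n hsummable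
    rw [hsum.tsum_eq] at this
    linarith [this]
  rw [htail]
  have hterm : ∀ k : ℕ, x ^ (k + n) / (k + n).factorial ≤
      x ^ n / n.factorial * (x ^ k / k.factorial) := by
    intro k
    rw [pow_add, div_mul_div_comm, mul_comm (x ^ n) (x ^ k), ← pow_add]
    apply div_le_div_of_nonneg_left (by positivity) (by positivity)
    exact_mod_cast Nat.le_of_dvd (k + n).factorial_pos
      (Nat.add_comm n k ▸ Nat.factorial_mul_factorial_dvd_factorial_add n k)
  calc ∑' k : ℕ, x ^ (k + n) / (k + n).factorial
      ≤ ∑' k : ℕ, x ^ n / n.factorial * (x ^ k / k.factorial) := by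
        apply Summable.tsum_le_tsum hterm
        · exact (summable_nat_add_iff n).2 hsummable
        · exact hsummable.mul_left _
    _ = x ^ n / n.factorial * Real.exp x := by
        rw [tsum_mul_left, hsum.tsum_eq]

open Finset in
/-- A single term of the exponential series is at most `exp x`. -/
lemma pow_div_factorial_le_exp (x : ℝ) (hx : 0 ≤ x) (n : ℕ) :
    x ^ n / n.factorial ≤ Real.exp x := by
  calc x ^ n / n.factorial
      ≤ ∑ k ∈ range (n + 1), x ^ k / k.factorial := by
        apply Finset.single_le_sum (f := fun k : ℕ => x ^ k / (k.factorial : ℝ))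
        · intro i _; positivity
        · simp
    _ ≤ Real.exp x := Real.sum_le_exp_of_nonneg hx _

open Finset in
lemma one_le_S (x : ℝ) (hx : 0 ≤ x) (d : ℕ) :
    1 ≤ ∑ k ∈ range (d + 1), x ^ k / (Nat.factorial k) := by
  calc (1 : ℝ) = x ^ 0 / (Nat.factorial 0) := by simp
    _ ≤ ∑ k ∈ range (d + 1), x ^ k / (Nat.factorial k) := by
        apply Finset.single_le_sum (f := fun k : ℕ => x ^ k / (k.factorial : ℝ))
        · intro i _; positivity
        · simp

open Finset in
lemma e_div_four_lt : (Real.exp 1 / 4 : ℝ) < 9 / 10 := by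
  have := Real.exp_one_lt_d9
  linarith

open Finset in
/-- Key bound: `((d+1)/4)^(d+1) / (d+1)! ≤ (e/4)^(d+1)`. -/
lemma key_pow_bound (d : ℕ) :
    (((d : ℝ) + 1) / 4) ^ (d + 1) / ((d + 1).factorial : ℝ) ≤
      (Real.exp 1 / 4) ^ (d + 1) := by
  have h1 : ((d : ℝ) + 1) ^ (d + 1) / ((d + 1).factorial : ℝ) ≤ Real.exp 1 ^ (d + 1) := by
    have h := pow_div_factorial_le_exp ((d : ℝ) + 1) (by positivity) (d + 1)
    have he : Real.exp ((d : ℝ) + 1) = Real.exp 1 ^ (d + 1) := by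
      rw [show ((d : ℝ) + 1) = ((d + 1 : ℕ) : ℝ) * 1 by push_cast; ring,
        Real.exp_nat_mul]
    rwa [he] at h
  have hfac : (0 : ℝ) < ((d + 1).factorial : ℝ) := by exact_mod_cast (d + 1).factorial_pos
  rw [div_pow, div_pow, div_div, div_le_div_iff₀ (by positivity) (by positivity)]
  have h1' := (div_le_iff₀ hfac).mp h1
  nlinarith [pow_pos (show (0:ℝ) < 4 by norm_num) (d + 1), pow_pos (Real.exp_pos 1) (d + 1)]

open Finset in
/-- The reciprocal of the degree-`d` Taylor truncation `S_d` of `e^x` approximates `e^{-x}` on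
`[0, ∞)` up to an error decaying exponentially in `d`. -/
theorem inv_taylor_truncation_approx_exp :
    ∃ C : ℝ, 0 < C ∧ ∃ c : ℝ, c ∈ Set.Ioo (0 : ℝ) 1 ∧
      ∀ d : ℕ, ∀ x : ℝ, 0 ≤ x →
        0 < ∑ k ∈ range (d + 1), x ^ k / (Nat.factorial k) ∧
        0 ≤ 1 / (∑ k ∈ range (d + 1), x ^ k / (Nat.factorial k)) - Real.exp (-x) ∧
        |1 / (∑ k ∈ range (d + 1), x ^ k / (Nat.factorial k)) - Real.exp (-x)| ≤
          C * c ^ d := by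
  refine ⟨2, by norm_num, 9/10, ⟨by norm_num, by norm_num⟩, ?_⟩
  intro d x hx
  set S := ∑ k ∈ range (d + 1), x ^ k / (Nat.factorial k) with hSdef
  have hS1 : 1 ≤ S := one_le_S x hx d
  have hS0 : 0 < S := lt_of_lt_of_le one_pos hS1
  have hSle : S ≤ Real.exp x := Real.sum_le_exp_of_nonneg hx _
  have hexp0 : 0 < Real.exp x := Real.exp_pos x
  have herr0 : 0 ≤ 1 / S - Real.exp (-x) := by
    rw [Real.exp_neg, sub_nonneg, one_div]
    exact inv_anti₀ hS0 hSle
  refine ⟨hS0, herr0, ?_⟩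
  rw [abs_of_nonneg herr0]
  have hc0 : (0:ℝ) < 9/10 := by norm_num
  have hcd : (0:ℝ) < (9/10 : ℝ) ^ d := pow_pos hc0 d
  rcases Nat.eq_zero_or_pos d with hd | hd
  · subst hd
    have : 1 / S ≤ 1 := by
      rw [div_le_one hS0]; exact hS1
    have hen : 0 ≤ Real.exp (-x) := (Real.exp_pos _).le
    simp only [pow_zero, mul_one]
    linarith
  -- d ≥ 1
  have hq : (Real.exp 1 / 4 : ℝ) < 9/10 := e_div_four_lt
  have hq0 : (0:ℝ) < Real.exp 1 / 4 := by positivity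
  rcases le_or_gt x (((d : ℝ) + 1) / 4) with hxle | hxgt
  · -- small x case
    have htail := exp_tail_le x hx (d + 1)
    have hbound : 1 / S - Real.exp (-x) ≤ x ^ (d + 1) / ((d + 1).factorial : ℝ) := by
      have h1 : 1 / S - Real.exp (-x) = (Real.exp x - S) / (S * Real.exp x) := by
        rw [Real.exp_neg]
        field_simp
      rw [h1]
      have h2 : (Real.exp x - S) / (S * Real.exp x) ≤ (Real.exp x - S) / Real.exp x := by
        apply div_le_div_of_nonneg_left (by linarith) hexp0
        nlinarith
      calc (Real.exp x - S) / (S * Real.exp x) ≤ (Real.exp x - S) / Real.exp x := h2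
        _ ≤ x ^ (d + 1) / ((d + 1).factorial : ℝ) * Real.exp x / Real.exp x := by
            gcongr
        _ = x ^ (d + 1) / ((d + 1).factorial : ℝ) := by
            field_simp
    have hfac : (0:ℝ) < ((d + 1).factorial : ℝ) := by exact_mod_cast (d + 1).factorial_pos
    have hx2 : x ^ (d + 1) / ((d + 1).factorial : ℝ) ≤ (Real.exp 1 / 4) ^ (d + 1) := by
      calc x ^ (d + 1) / ((d + 1).factorial : ℝ)
          ≤ (((d : ℝ) + 1) / 4) ^ (d + 1) / ((d + 1).factorial : ℝ) := by
            gcongr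
        _ ≤ (Real.exp 1 / 4) ^ (d + 1) := key_pow_bound d
    have h3 : (Real.exp 1 / 4 : ℝ) ^ (d + 1) ≤ (9/10 : ℝ) ^ d := by
      calc (Real.exp 1 / 4 : ℝ) ^ (d + 1) ≤ (9/10 : ℝ) ^ (d + 1) :=
            pow_le_pow_left₀ hq0.le hq.le (d + 1)
        _ ≤ (9/10 : ℝ) ^ d := pow_le_pow_of_le_one (by norm_num) (by norm_num) (by omega)
    linarith
  · -- large x case: S ≥ S_d(t) with t = (d+1)/4
    set t : ℝ := ((d : ℝ) + 1) / 4 with ht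
    have ht0 : 0 ≤ t := by positivity
    have hmono : ∑ k ∈ range (d + 1), t ^ k / (Nat.factorial k) ≤ S := by
      apply Finset.sum_le_sum
      intro i _
      gcongr
    have htail := exp_tail_le t ht0 (d + 1)
    have hexpt : 0 < Real.exp t := Real.exp_pos t
    have hsmall : t ^ (d + 1) / ((d + 1).factorial : ℝ) ≤ 1 / 2 := by
      have h1 : t ^ (d + 1) / ((d + 1).factorial : ℝ) ≤ (Real.exp 1 / 4) ^ (d + 1) :=
        key_pow_bound d
      have h2 : (Real.exp 1 / 4 : ℝ) ^ (d + 1) ≤ (Real.exp 1 / 4) ^ 2 := by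
        apply pow_le_pow_of_le_one hq0.le _ (by omega)
        have := Real.exp_one_lt_d9; linarith
      have h3 : (Real.exp 1 / 4 : ℝ) ^ 2 ≤ 1 / 2 := by
        have := Real.exp_one_lt_d9
        nlinarith [Real.exp_pos 1]
      linarith
    have hSt : Real.exp t / 2 ≤ ∑ k ∈ range (d + 1), t ^ k / (Nat.factorial k) := by
      have : Real.exp t - ∑ k ∈ range (d + 1), t ^ k / (Nat.factorial k) ≤
          (1/2) * Real.exp t := by
        calc Real.exp t - ∑ k ∈ range (d + 1), t ^ k / (Nat.factorial k)
            ≤ t ^ (d + 1) / ((d + 1).factorial : ℝ) * Real.exp t := htail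
          _ ≤ (1/2) * Real.exp t := by nlinarith
      linarith
    have hSbig : Real.exp t / 2 ≤ S := le_trans hSt hmono
    have hinv : 1 / S ≤ 2 * Real.exp (-t) := by
      rw [Real.exp_neg, div_le_iff₀ hS0]
      have h2S : Real.exp t ≤ 2 * S := by linarith
      have hm : (Real.exp t)⁻¹ * Real.exp t = 1 := inv_mul_cancel₀ hexpt.ne'
      nlinarith [inv_pos.mpr hexpt]
    have hexpt_le : Real.exp (-t) ≤ (9/10 : ℝ) ^ d := by
      have h1 : Real.exp (-t) = Real.exp (-(1/4)) ^ (d + 1) := by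
        rw [← Real.exp_nat_mul]
        congr 1
        push_cast
        rw [ht]; ring
      have h2 : Real.exp (-(1/4)) ≤ 9/10 := by
        rw [Real.exp_neg]
        have h10 : (10:ℝ)/9 ≤ Real.exp (1/4) := by
          nlinarith [Real.add_one_le_exp (1/4 : ℝ)]
        calc (Real.exp (1/4))⁻¹ ≤ ((10:ℝ)/9)⁻¹ := inv_anti₀ (by norm_num) h10
          _ ≤ 9/10 := by norm_num
      rw [h1]
      calc Real.exp (-(1/4)) ^ (d + 1) ≤ (9/10 : ℝ) ^ (d + 1) :=
            pow_le_pow_left₀ (Real.exp_pos _).le h2 (d + 1)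
        _ ≤ (9/10 : ℝ) ^ d := pow_le_pow_of_le_one (by norm_num) (by norm_num) (by omega)
    have hen : 0 ≤ Real.exp (-x) := (Real.exp_pos _).le
    calc 1 / S - Real.exp (-x) ≤ 1 / S := by linarith
      _ ≤ 2 * Real.exp (-t) := hinv
      _ ≤ 2 * (9/10 : ℝ) ^ d := by linarith
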